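/- Let F be an algebraic number field with ring of integers O_F, and let P(X) = X^d + aX^t − b ∈ O_F[X] be a monic irreducible trinomial with exponents d > t ≥ 1 whose middle coefficient is divisible by the absolute coefficient, say a = v·b with v ∈ O_F. Let θ be a root of P and E = F(θ), so [E:F] = d. Then: (i) N_{E/F}(θ) = (−1)^{d−1}·b; (ii) U := (−1)^{d−1}(1 − v·θ^t) is a unit of the ring of integers O_E; and (iii) θ generates an ambiguous principal ideal of E/F, i.e., (θ·O_E)^d = (b·O_F)·O_E. -/

import Mathlib

open NumberField Polynomial

/-- For a monic irreducible trinomial `P(X) = X^d + a·X^t − b` over the ring of integers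
of a number field `F`, with `d > t ≥ 1` and middle coefficient `a = v·b` divisible by the
absolute coefficient `b`, a root `θ` of `P` generating the extension `E = F(θ)` of degree
`d` satisfies: (i) `N_{E/F}(θ) = (−1)^(d−1)·b`; (ii) `(−1)^(d−1)·(1 − v·θ^t)` is a unit of
`𝓞 E`; (iii) `θ` generates an ambiguous principal ideal: `(θ·𝓞 E)^d = (b·𝓞 F)·𝓞 E`. -/
theorem trinomial_root_generates_ambiguous_principal_ideal
    (F E : Type*) [Field F] [NumberField F] [Field E] [NumberField E]
    [Algebra F E]
    (d t : ℕ) (hdt : t < d) (ht : 1 ≤ t)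
    (a b v : 𝓞 F) (hab : a = v * b)
    (P : Polynomial F) (hP : P = X ^ d + C (a : F) * X ^ t - C (b : F))
    (hirr : Irreducible P)
    (θ : 𝓞 E) (hroot : Polynomial.aeval ((θ : E)) P = 0)
    (hgen : IntermediateField.adjoin F {((θ : E))} = ⊤)
    (hdeg : Module.finrank F E = d) :
    Algebra.norm F ((θ : E)) = (-1 : F) ^ (d - 1) * (b : F) ∧
    IsUnit ((-1 : 𝓞 E) ^ (d - 1) * (1 - algebraMap (𝓞 F) (𝓞 E) v * θ ^ t)) ∧
    (Ideal.span {θ} : Ideal (𝓞 E)) ^ d =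
      Ideal.map (algebraMap (𝓞 F) (𝓞 E)) (Ideal.span {b}) := by
  have hd2 : 2 ≤ d := by omega
  haveI : FiniteDimensional F E := Module.Finite.right ℚ F E
  -- basic facts about `P`
  have hmonic : P.Monic := by
    rw [hP, add_sub_assoc]
    apply monic_X_pow_add
    apply lt_of_le_of_lt (degree_sub_le _ _)
    simp only [max_lt_iff]
    constructor
    · apply lt_of_le_of_lt (degree_C_mul_X_pow_le _ _)
      exact_mod_cast hdt
    · exact lt_of_le_of_lt degree_C_le (by exact_mod_cast (by omega : 0 < d))
  have hnd : P.natDegree = d := by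
    rw [hP]
    compute_degree!
    · rw [if_neg (by omega), if_neg (by omega)]; simp
    all_goals omega
  have hc0 : P.coeff 0 = -(b : F) := by
    rw [hP]
    simp only [coeff_sub, coeff_add, coeff_X_pow, coeff_C_mul, coeff_C,
      if_neg (by omega : ¬ (0:ℕ) = d), if_neg (by omega : ¬ (0:ℕ) = t)]
    simp
  -- Part (i): the norm of θ
  have hmin : minpoly F ((θ : E)) = P :=
    (minpoly.eq_of_irreducible_of_monic hirr hroot hmonic).symm
  have hint : IsIntegral F ((θ : E)) := ⟨P, hmonic, hroot⟩
  let e : (IntermediateField.adjoin F {((θ : E))}) ≃ₐ[F] E :=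
    (IntermediateField.equivOfEq hgen).trans IntermediateField.topEquiv
  let pb := (IntermediateField.adjoin.powerBasis hint).map e
  have hgenpb : pb.gen = (θ : E) := by
    simp [pb, e, IntermediateField.adjoin.powerBasis]
  have hdim : pb.dim = d := by
    have := pb.finrank
    omega
  have hnorm : Algebra.norm F ((θ : E)) = (-1 : F) ^ (d - 1) * (b : F) := by
    have h := Algebra.PowerBasis.norm_gen_eq_coeff_zero_minpoly pb
    rw [hgenpb, hdim, hmin, hc0] at h
    rw [h]
    have h2 : ((-1 : F)) ^ d = (-1) ^ (d - 1) * (-1) := by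
      rw [← pow_succ]
      congr 1
      omega
    rw [h2]
    ring
  -- `b` is nonzero
  have hbne : (b : F) ≠ 0 := by
    intro hb0
    have hθ0 : (θ : E) = 0 := by
      have h := Algebra.norm_eq_zero_iff (R := F) (S := E) (x := (θ : E))
      rw [hnorm, hb0, mul_zero] at h
      exact h.mp rfl
    rw [hθ0, minpoly.zero] at hmin
    have : P.natDegree = 1 := by rw [← hmin]; simp
    omega
  -- the key relation `θ^d = b·(1 − v·θ^t)` in `E`
  have hvb : algebraMap F E (v : F) * algebraMap F E (b : F) = algebraMap F E (a : F) := by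
    rw [← map_mul]
    congr 1
    rw [hab]
    push_cast
    ring
  have hrelE : (θ : E) ^ d = algebraMap F E (b : F) *
      (1 - algebraMap F E (v : F) * (θ : E) ^ t) := by
    rw [hP] at hroot
    simp only [map_sub, map_add, map_mul, map_pow, aeval_X, aeval_C] at hroot
    linear_combination hroot + ((θ : E)) ^ t * hvb
  -- the same relation in `𝓞 E`
  have hrel : θ ^ d = algebraMap (𝓞 F) (𝓞 E) b *
      (1 - algebraMap (𝓞 F) (𝓞 E) v * θ ^ t) := by
    apply RingOfIntegers.coe_injective
    show (θ : E) ^ d = algebraMap F E (b : F) * (1 - algebraMap F E (v : F) * (θ : E) ^ t)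
    exact hrelE
  -- Part (ii): the unit
  set w : 𝓞 E := 1 - algebraMap (𝓞 F) (𝓞 E) v * θ ^ t with hw
  have hcoe : (w : E) = 1 - algebraMap F E (v : F) * (θ : E) ^ t := rfl
  have hwu : IsUnit w := by
    have hnw : Algebra.norm F ((w : E)) = 1 := by
      have hrelE' : (θ : E) ^ d = algebraMap F E (b : F) * ((w : E)) := by
        rw [hcoe]; exact hrelE
      have h := congrArg (Algebra.norm F) hrelE'
      rw [map_pow, map_mul, Algebra.norm_algebraMap, hdeg, hnorm] at h
      have hb : ((b : F)) ^ d ≠ 0 := pow_ne_zero _ hbne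
      have heven : Even ((d - 1) * d) := by
        rcases Nat.even_or_odd d with hpar | hpar
        · exact hpar.mul_left _
        · have : Even (d - 1) := by
            rcases hpar with ⟨k, hk⟩
            exact ⟨k, by omega⟩
          exact this.mul_right _
      have hlhs : ((-1 : F) ^ (d - 1) * (b : F)) ^ d = (b : F) ^ d := by
        rw [mul_pow, ← pow_mul, heven.neg_one_pow, one_mul]
      rw [hlhs] at h
      have h1 : (b : F) ^ d * 1 = (b : F) ^ d * Algebra.norm F ((w : E)) := by
        rw [mul_one]; exact h
      exact (mul_left_cancel₀ hb h1).symm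
    rw [NumberField.isUnit_iff_norm]
    have hcn : ((RingOfIntegers.norm ℚ w : 𝓞 ℚ) : ℚ) = Algebra.norm ℚ ((w : E)) := by simp
    rw [hcn, ← Algebra.norm_norm (R := ℚ) (S := F) (a := (w : E)), hnw, map_one, abs_one]
  have hunit : IsUnit ((-1 : 𝓞 E) ^ (d - 1) * (1 - algebraMap (𝓞 F) (𝓞 E) v * θ ^ t)) :=
    (isUnit_one.neg.pow _).mul hwu
  refine ⟨hnorm, hunit, ?_⟩
  -- Part (iii)
  rw [Ideal.map_span, Set.image_singleton, Ideal.span_singleton_pow, hrel]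
  exact Ideal.span_singleton_mul_right_unit hwu _
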